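/- Fix x_t with α := α(x_t) ∈ (0,1), vectors v^old, v⁺, v⁻ ∈ ℝ^n satisfying v^old = α v⁺ + (1−α)v⁻, and β > 0. For an unknown u ∈ ℝ^n define v_u⁺ := (1−β)v^old + β u and v_u⁻ := (1+β)v^old − β u. Then the pointwise loss L(u) = α‖v_u⁺ − v⁺‖² + (1−α)‖v_u⁻ − v⁻‖² is minimized uniquely at u* = v^old + (2/β)Δ, where Δ = α(v⁺ − v^old). -/

import Mathlib

/-- The pointwise implicit-parameterization loss is uniquely minimized at
u* = v_old + (2/β) Δ where Δ = α (v⁺ − v_old). -/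
theorem stmt6 (n : ℕ) (α β : ℝ) (hα : α ∈ Set.Ioo (0:ℝ) 1) (hβ : 0 < β)
    (vold vp vm : EuclideanSpace ℝ (Fin n))
    (hmix : vold = α • vp + (1 - α) • vm) :
    ∀ u : EuclideanSpace ℝ (Fin n), u ≠ vold + (2 / β) • (α • (vp - vold)) →
      α * ‖((1 - β) • vold + β • (vold + (2 / β) • (α • (vp - vold)))) - vp‖ ^ 2 +
        (1 - α) * ‖((1 + β) • vold - β • (vold + (2 / β) • (α • (vp - vold)))) - vm‖ ^ 2 <
      α * ‖((1 - β) • vold + β • u) - vp‖ ^ 2 +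
        (1 - α) * ‖((1 + β) • vold - β • u) - vm‖ ^ 2 := by
  obtain ⟨hα0, hα1⟩ := hα
  intro u hu
  have hβ0 : β ≠ 0 := ne_of_gt hβ
  set ustar : EuclideanSpace ℝ (Fin n) := vold + (2 / β) • (α • (vp - vold)) with hus
  set w : EuclideanSpace ℝ (Fin n) := u - ustar with hw
  have hw0 : w ≠ 0 := sub_ne_zero.mpr hu
  set A : EuclideanSpace ℝ (Fin n) := ((1 - β) • vold + β • ustar) - vp with hA
  set B : EuclideanSpace ℝ (Fin n) := ((1 + β) • vold - β • ustar) - vm with hB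
  have key : α • A = (1 - α) • B := by
    rw [hA, hB, hus, hmix]
    match_scalars <;> field_simp <;> ring
  have h1 : ((1 - β) • vold + β • u) - vp = A + β • w := by
    rw [hA, hw]; module
  have h2 : ((1 + β) • vold - β • u) - vm = B - β • w := by
    rw [hB, hw]; module
  rw [h1, h2, norm_add_sq_real A (β • w), norm_sub_sq_real B (β • w)]
  have hcross : α * (inner ℝ A (β • w) : ℝ) = (1 - α) * (inner ℝ B (β • w) : ℝ) := by
    rw [← real_inner_smul_left, ← real_inner_smul_left, key]
  have hbw : (β • w : EuclideanSpace ℝ (Fin n)) ≠ 0 := smul_ne_zero hβ0 hw0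
  have hn : 0 < ‖(β • w : EuclideanSpace ℝ (Fin n))‖ ^ 2 :=
    pow_pos (norm_pos_iff.mpr hbw) 2
  nlinarith [hcross, hn, hα0, hα1]
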